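/- arXiv:2105.09166 — 5 statements merged into one kernel-verified Lean document; each statement's English description precedes it below -/
import Mathlib

section
/- Let V be a 3-dimensional real vector space, let N ∈ V be nonzero, and let m be a symmetric bilinear form on V whose radical is exactly the span of N (that is, m(N,·) = 0, and m(x,·) = 0 implies x ∈ span{N}). Let T : V × V × V × V → ℝ be a 4-linear map satisfying the symmetries of a Riemann tensor: T(x,y,z,w) = −T(y,x,z,w) = −T(x,y,w,z) = T(z,w,x,y) and the first Bianchi identity T(x,y,z,w) + T(y,z,x,w) + T(z,x,y,w) = 0. Suppose moreover that T(N,y,z,w) = 0 for all y,z,w ∈ V (so that, by the symmetries, T is annihilated by N in every argument). Then there exists a scalar λ ∈ ℝ such that T(x,y,z,w) = (λ/2)·(m(x,z)·m(w,y) − m(y,z)·m(w,x)) for all x,y,z,w ∈ V. -/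
noncomputable def quadForm {V : Type*} [AddCommGroup V] [Module ℝ V]
    (m : V →ₗ[ℝ] V →ₗ[ℝ] ℝ) (lam : ℝ) : V →ₗ[ℝ] V →ₗ[ℝ] V →ₗ[ℝ] V →ₗ[ℝ] ℝ :=
  LinearMap.mk₂ ℝ
    (fun x y => LinearMap.mk₂ ℝ (fun z w => lam / 2 * (m x z * m w y - m y z * m w x))
      (fun z₁ z₂ w => by simp [map_add, LinearMap.add_apply]; ring)
      (fun a z w => by simp [map_smul, LinearMap.smul_apply, smul_eq_mul]; ring)
      (fun z w₁ w₂ => by simp [map_add, LinearMap.add_apply]; ring)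
      (fun a z w => by simp [map_smul, LinearMap.smul_apply, smul_eq_mul]; ring))
    (fun x₁ x₂ y => by
      ext z w
      simp [map_add, LinearMap.add_apply]; ring)
    (fun a x y => by
      ext z w
      simp [map_smul, LinearMap.smul_apply, smul_eq_mul]; ring)
    (fun x y₁ y₂ => by
      ext z w
      simp [map_add, LinearMap.add_apply]; ring)
    (fun a x y => by
      ext z w
      simp [map_smul, LinearMap.smul_apply, smul_eq_mul]; ring)

@[simp] theorem quadForm_apply {V : Type*} [AddCommGroup V] [Module ℝ V]
    (m : V →ₗ[ℝ] V →ₗ[ℝ] ℝ) (lam : ℝ) (x y z w : V) :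
    quadForm m lam x y z w = lam / 2 * (m x z * m w y - m y z * m w x) := rfl

set_option maxHeartbeats 2000000


/-- A 4-linear map on a 3-dimensional real vector space with all the
symmetries of a Riemann tensor, annihilated by the degeneration vector `N` of a
symmetric bilinear form `m` whose radical is exactly the span of `N`, must be
proportional to `(1/2)·(m x z · m w y − m y z · m w x)`. -/
theorem stmt0 (V : Type*) [AddCommGroup V] [Module ℝ V]
    (hdim : Module.finrank ℝ V = 3)
    (N : V) (hN : N ≠ 0)
    (m : V →ₗ[ℝ] V →ₗ[ℝ] ℝ)
    (hmsym : ∀ x y : V, m x y = m y x)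
    (hmN : ∀ y : V, m N y = 0)
    (hrad : ∀ x : V, (∀ y : V, m x y = 0) → x ∈ Submodule.span ℝ ({N} : Set V))
    (T : V →ₗ[ℝ] V →ₗ[ℝ] V →ₗ[ℝ] V →ₗ[ℝ] ℝ)
    (hT1 : ∀ x y z w : V, T x y z w = - T y x z w)
    (hT2 : ∀ x y z w : V, T x y z w = - T x y w z)
    (hT3 : ∀ x y z w : V, T x y z w = T z w x y)
    (hBianchi : ∀ x y z w : V, T x y z w + T y z x w + T z x y w = 0)
    (hTN : ∀ y z w : V, T N y z w = 0) :
    ∃ lam : ℝ, ∀ x y z w : V,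
      T x y z w = (lam / 2) * (m x z * m w y - m y z * m w x) := by
  have hfd : FiniteDimensional ℝ V := Module.finite_of_finrank_pos (by omega)
  obtain ⟨W, hW⟩ := Submodule.exists_isCompl (Submodule.span ℝ ({N} : Set V))
  have hrW : Module.finrank ℝ W = 2 := by
    have h1 := Submodule.finrank_add_eq_of_isCompl hW
    rw [finrank_span_singleton hN, hdim] at h1
    omega
  obtain ⟨g, hgind, hgmem⟩ : ∃ g : Fin 2 → V, LinearIndependent ℝ g ∧ ∀ i, g i ∈ W := by
    refine ⟨fun i => (((Module.finBasis ℝ W).reindex (finCongr hrW)) i : V), ?_, fun i => ?_⟩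
    · exact (((Module.finBasis ℝ W).reindex (finCongr hrW)).linearIndependent.map'
        W.subtype W.ker_subtype)
    · exact (((Module.finBasis ℝ W).reindex (finCongr hrW)) i).2
  have hnotin : N ∉ Submodule.span ℝ (Set.range g) := by
    intro h
    have hsub : Submodule.span ℝ (Set.range g) ≤ W := by
      rw [Submodule.span_le]; rintro _ ⟨i, rfl⟩; exact hgmem i
    have : N ∈ Submodule.span ℝ ({N} : Set V) ⊓ W :=
      ⟨Submodule.mem_span_singleton_self N, hsub h⟩
    rw [hW.inf_eq_bot] at this
    exact hN this
  have hli : LinearIndependent ℝ (Fin.cons N g : Fin 3 → V) :=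
    linearIndependent_fin_cons.mpr ⟨hgind, hnotin⟩
  obtain ⟨b, hbco⟩ : ∃ b : Module.Basis (Fin 3) ℝ V, ⇑b = Fin.cons N g :=
    ⟨basisOfLinearIndependentOfCardEqFinrank hli (by simp [hdim]),
      coe_basisOfLinearIndependentOfCardEqFinrank hli _⟩
  have hb0 : b 0 = N := by rw [hbco]; rfl
  set e1 : V := g 0 with he1
  set e2 : V := g 1 with he2
  have hb1 : b 1 = e1 := by rw [hbco]; rfl
  have hb2 : b 2 = e2 := by rw [hbco]; rfl
  -- auxiliary symmetry facts
  have hmN' : ∀ y : V, m y N = 0 := fun y => by rw [hmsym]; exact hmN y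
  have hTN2 : ∀ x z w : V, T x N z w = 0 := fun x z w => by rw [hT1]; simp [hTN]
  have hTN3 : ∀ x y w : V, T x y N w = 0 := fun x y w => by rw [hT3]; exact hTN w x y
  have hTN4 : ∀ x y z : V, T x y z N = 0 := fun x y z => by rw [hT2]; simp [hTN3]
  have hTaa : ∀ x z w : V, T x x z w = 0 := fun x z w => by
    have := hT1 x x z w; linarith
  have hTcc : ∀ x y z : V, T x y z z = 0 := fun x y z => by
    have := hT2 x y z z; linarith
  have hm21 : m e2 e1 = m e1 e2 := hmsym e2 e1
  -- the span membership / repr lemma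
  have hrepr : ∀ u : V, u ∈ Submodule.span ℝ ({N} : Set V) → b.repr u 1 = 0 ∧ b.repr u 2 = 0 := by
    intro u hu
    rw [Submodule.mem_span_singleton] at hu
    obtain ⟨t, rfl⟩ := hu
    rw [← hb0]
    constructor <;> simp [map_smul, b.repr_self, Finsupp.single_apply]
  -- nondegeneracy of the 2x2 block
  have hdet : m e1 e1 * m e2 e2 - m e1 e2 * m e1 e2 ≠ 0 := by
    intro hdet0
    -- first: m e1 e2 = 0 and m e2 e2 = 0
    have hu : ∀ y : V, m (m e2 e2 • e1 - m e1 e2 • e2) y = 0 := by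
      have hfun : m (m e2 e2 • e1 - m e1 e2 • e2) = 0 := by
        apply b.ext
        intro i
        fin_cases i <;>
          simp only [Fin.zero_eta, Fin.mk_one, Fin.reduceFinMk, hb0, hb1, hb2,
            map_sub, map_smul, LinearMap.sub_apply,
            LinearMap.smul_apply, smul_eq_mul, LinearMap.zero_apply]
        · simp [hmN']
        · linear_combination hdet0 - m e1 e2 * (hmsym e2 e1)
        · ring
      intro y; rw [hfun]; rfl
    obtain ⟨h1, h2⟩ := hrepr _ (hrad _ hu)
    rw [map_sub, map_smul, map_smul, ← hb1, ← hb2] at h1 h2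
    simp [b.repr_self, Finsupp.single_apply] at h1 h2
    rw [hb2] at h1
    rw [hb1, hb2] at h2
    -- so e2 is in the radical
    have he2rad : ∀ y : V, m e2 y = 0 := by
      have hfun : m e2 = 0 := by
        apply b.ext
        intro i
        fin_cases i <;>
          simp only [Fin.zero_eta, Fin.mk_one, Fin.reduceFinMk, hb0, hb1, hb2,
            LinearMap.zero_apply]
        · exact hmN' e2
        · rw [hmsym]; exact h2
        · exact h1
      intro y; rw [hfun]; rfl
    obtain ⟨_, h2'⟩ := hrepr _ (hrad _ he2rad)
    rw [← hb2] at h2'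
    simp [b.repr_self] at h2'
  have hv2 : T e1 e2 e2 e1 = -T e1 e2 e1 e2 := by rw [hT2]
  have hv3 : T e2 e1 e1 e2 = -T e1 e2 e1 e2 := by rw [hT1]
  have hv4 : T e2 e1 e2 e1 = T e1 e2 e1 e2 := by rw [hT1, hT2]; ring
  refine ⟨2 * T e1 e2 e1 e2 / (m e1 e1 * m e2 e2 - m e1 e2 * m e1 e2), ?_⟩
  have hkey : 2 * T e1 e2 e1 e2 / (m e1 e1 * m e2 e2 - m e1 e2 * m e1 e2) / 2 *
      (m e1 e1 * m e2 e2 - m e1 e2 * m e1 e2) = T e1 e2 e1 e2 := by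
    rw [div_div, mul_comm 2, mul_div_mul_right _ _ two_ne_zero, div_mul_cancel₀ _ hdet]
  have hTR : T = quadForm m (2 * T e1 e2 e1 e2 / (m e1 e1 * m e2 e2 - m e1 e2 * m e1 e2)) := by
    apply b.ext; intro i
    apply b.ext; intro j
    apply b.ext; intro k
    apply b.ext; intro l
    fin_cases i <;> fin_cases j <;> fin_cases k <;> fin_cases l <;>
      simp only [Fin.zero_eta, Fin.mk_one, Fin.reduceFinMk, hb0, hb1, hb2, quadForm_apply] <;>
      first
        | (simp [hTN, hTN2, hTN3, hTN4, hmN, hmN']; done)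
        | (simp [hTaa, hTcc, hmsym, mul_comm]; done)
        | (simp only [hv2, hv3, hv4, hm21]; linear_combination hkey)
        | (simp only [hv2, hv3, hv4, hm21]; linear_combination -hkey)
  intro x y z w
  conv_lhs => rw [hTR]
  exact quadForm_apply m _ x y z w
end

section
/- Let V be a finite-dimensional real vector space, let N ∈ V be nonzero, and let m be a symmetric bilinear form on V whose radical is exactly the span of N. Regard m as a linear map m♭ : V → V* by m♭(x) = m(x,·). Then: (i) there exists a symmetric bilinear form h on V* such that, with h♯ : V* → V the induced map, m♭ ∘ h♯ ∘ m♭ = m♭; and (ii) if h and h' are two symmetric bilinear forms on V* both satisfying this condition, then there exists v ∈ V such that h'(α,β) − h(α,β) = α(N)·β(v) + β(N)·α(v) for all α,β ∈ V*. -/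
open Module

/-- existence of an "inverse" `h` of a degenerate symmetric bilinear
form `m` with radical spanned by `N ≠ 0` (in the sense `m♭ ∘ h♯ ∘ m♭ = m♭`), and
the freedom in its choice is exactly addition of `α(N)β(v) + β(N)α(v)`. -/
theorem stmt1 (V : Type*) [AddCommGroup V] [Module ℝ V] [FiniteDimensional ℝ V]
    (N : V) (hN : N ≠ 0)
    (m : V →ₗ[ℝ] V →ₗ[ℝ] ℝ)
    (hmsym : ∀ x y : V, m x y = m y x)
    (hmN : ∀ y : V, m N y = 0)
    (hrad : ∀ x : V, (∀ y : V, m x y = 0) → x ∈ Submodule.span ℝ ({N} : Set V)) :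
    (∃ h : Dual ℝ V →ₗ[ℝ] Dual ℝ V →ₗ[ℝ] ℝ,
      (∀ α β : Dual ℝ V, h α β = h β α) ∧
      ∀ x : V, m ((evalEquiv ℝ V).symm (h (m x))) = m x) ∧
    (∀ h h' : Dual ℝ V →ₗ[ℝ] Dual ℝ V →ₗ[ℝ] ℝ,
      (∀ α β : Dual ℝ V, h α β = h β α) →
      (∀ α β : Dual ℝ V, h' α β = h' β α) →
      (∀ x : V, m ((evalEquiv ℝ V).symm (h (m x))) = m x) →
      (∀ x : V, m ((evalEquiv ℝ V).symm (h' (m x))) = m x) →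
      ∃ v : V, ∀ α β : Dual ℝ V, h' α β - h α β = α N * β v + β N * α v) := by
  classical
  -- x ↦ m x N = 0
  have hmN' : ∀ x : V, m x N = 0 := fun x => by rw [hmsym]; exact hmN x
  -- a functional ξ with ξ N = 1
  obtain ⟨ξ, hξ⟩ : ∃ ξ : Dual ℝ V, ξ N = 1 := by
    obtain ⟨ξ', hξ'⟩ : ∃ f : Dual ℝ V, f N ≠ 0 := by
      by_contra hcon
      push_neg at hcon
      exact hN ((Module.forall_dual_apply_eq_zero_iff ℝ N).mp hcon)
    exact ⟨(ξ' N)⁻¹ • ξ', by simp [inv_mul_cancel₀ hξ']⟩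
  -- kernel of m is the span of N
  have hker : LinearMap.ker m = Submodule.span ℝ ({N} : Set V) := by
    apply le_antisymm
    · intro x hx
      refine hrad x fun y => ?_
      have := LinearMap.mem_ker.mp hx
      rw [this]; rfl
    · rw [Submodule.span_singleton_le_iff_mem]
      refine LinearMap.mem_ker.mpr ?_
      ext y; simpa using hmN y
  -- every functional vanishing on N is in the range of m
  have hsurj : ∀ α : Dual ℝ V, α N = 0 → ∃ x : V, m x = α := by
    set ev : Dual ℝ V →ₗ[ℝ] ℝ := Module.Dual.eval ℝ V N with hev
    have hRle : LinearMap.range m ≤ LinearMap.ker ev := by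
      rintro _ ⟨x, rfl⟩
      simp [hev, Module.Dual.eval_apply, hmN' x]
    have hrk : finrank ℝ (LinearMap.range m) + 1 = finrank ℝ V := by
      have := LinearMap.finrank_range_add_finrank_ker m
      rwa [hker, finrank_span_singleton hN] at this
    have hevsurj : LinearMap.range ev = ⊤ := by
      rw [LinearMap.range_eq_top]
      intro r
      exact ⟨r • ξ, by simp [hev, Module.Dual.eval_apply, hξ]⟩
    have hkerev : finrank ℝ (LinearMap.ker ev) + 1 = finrank ℝ V := by
      have := LinearMap.finrank_range_add_finrank_ker ev
      rw [hevsurj] at this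
      have h1 : finrank ℝ (⊤ : Submodule ℝ ℝ) = 1 := by simp
      rw [h1] at this
      have hd : finrank ℝ (Dual ℝ V) = finrank ℝ V := Subspace.dual_finrank_eq
      omega
    have heq : LinearMap.range m = LinearMap.ker ev := by
      have hle : finrank ℝ (LinearMap.ker ev) ≤ finrank ℝ (LinearMap.range m) := by
        omega
      exact Submodule.eq_of_le_of_finrank_le hRle hle
    intro α hα
    have : α ∈ LinearMap.range m := by
      rw [heq]
      exact LinearMap.mem_ker.mpr (by simpa [hev, Module.Dual.eval_apply] using hα)
    exact this
  -- Part 1: existence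
  constructor
  · obtain ⟨W, hW⟩ := Submodule.exists_isCompl (Submodule.span ℝ ({N} : Set V))
    -- the restricted bilinear form as a map W → Dual W
    set f : W →ₗ[ℝ] Dual ℝ W := W.subtype.dualMap ∘ₗ m ∘ₗ W.subtype with hf
    have hfapp : ∀ w w' : W, f w w' = m w w' := fun w w' => rfl
    have hfinj : Function.Injective f := by
      rw [← LinearMap.ker_eq_bot, LinearMap.ker_eq_bot']
      intro w hw
      have hmw : ∀ y : V, m (w : V) y = 0 := by
        intro y
        obtain ⟨a, b, ha, hb, rfl⟩ := Submodule.codisjoint_iff_exists_add_eq.mp hW.codisjoint y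
        obtain ⟨c, rfl⟩ := Submodule.mem_span_singleton.mp ha
        have h1 : m (w : V) b = 0 := by
          have := LinearMap.congr_fun hw ⟨b, hb⟩
          simpa [hfapp] using this
        simp [h1, hmN' w]
      have h1 : (w : V) ∈ Submodule.span ℝ ({N} : Set V) := hrad _ hmw
      have h2 : (w : V) = 0 := by
        have := hW.disjoint.le_bot (Submodule.mem_inf.mpr ⟨h1, w.2⟩)
        simpa using this
      exact Subtype.ext h2
    have hdim : finrank ℝ W = finrank ℝ (Dual ℝ W) := Subspace.dual_finrank_eq.symm
    set e := f.linearEquivOfInjective hfinj hdim with he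
    have heapp : ∀ w : W, e w = f w := fun w =>
      LinearMap.linearEquivOfInjective_apply hfinj hdim w
    set S : Dual ℝ V →ₗ[ℝ] V := W.subtype ∘ₗ e.symm.toLinearMap ∘ₗ W.subtype.dualMap
      with hSdef
    have hSmem : ∀ β : Dual ℝ V, S β ∈ W := fun β => (e.symm (W.subtype.dualMap β)).2
    have hS : ∀ (β : Dual ℝ V) (w : W), m (S β) w = β w := by
      intro β w
      have h1 : f (e.symm (W.subtype.dualMap β)) = W.subtype.dualMap β := by
        rw [← heapp]; exact e.apply_symm_apply _
      have := LinearMap.congr_fun h1 w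
      simp [hfapp] at this; exact this
    -- the candidate inverse
    refine ⟨LinearMap.lcomp ℝ ℝ S, ?_, ?_⟩
    · intro α β
      have h1 : m (S α) (S β) = α (S β) := hS α ⟨S β, hSmem β⟩
      have h2 : m (S β) (S α) = β (S α) := hS β ⟨S α, hSmem α⟩
      simp only [LinearMap.lcomp_apply]
      rw [← h1, ← h2, hmsym]
    · intro x
      have hrepr : (evalEquiv ℝ V).symm (LinearMap.lcomp ℝ ℝ S (m x)) = S (m x) := by
        apply (evalEquiv ℝ V).symm_apply_eq.mpr
        ext α
        have h1 : m (S α) (S (m x)) = α (S (m x)) := hS α ⟨S (m x), hSmem _⟩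
        have h2 : m (S (m x)) (S α) = (m x) (S α) := hS (m x) ⟨S α, hSmem _⟩
        simp only [LinearMap.lcomp_apply, evalEquiv_apply, Dual.eval_apply]
        rw [← h2, hmsym, h1]
      rw [hrepr]
      ext y
      obtain ⟨a, b, ha, hb, rfl⟩ := Submodule.codisjoint_iff_exists_add_eq.mp hW.codisjoint y
      obtain ⟨c, rfl⟩ := Submodule.mem_span_singleton.mp ha
      have h1 : m (S (m x)) b = (m x) b := hS (m x) ⟨b, hb⟩
      simp [h1, hmN' _]
  -- Part 2: uniqueness up to α(N)β(v)+β(N)α(v)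
  · intro h h' hsym hsym' hinv hinv'
    set T : Dual ℝ V →ₗ[ℝ] V :=
      (evalEquiv ℝ V).symm.toLinearMap ∘ₗ h' - (evalEquiv ℝ V).symm.toLinearMap ∘ₗ h
      with hTdef
    have hTapp : ∀ α β : Dual ℝ V, h' α β - h α β = β (T α) := by
      intro α β
      have h1 : β ((evalEquiv ℝ V).symm (h α)) = h α β := by
        conv_rhs => rw [← (evalEquiv ℝ V).apply_symm_apply (h α)]
        rfl
      have h2 : β ((evalEquiv ℝ V).symm (h' α)) = h' α β := by
        conv_rhs => rw [← (evalEquiv ℝ V).apply_symm_apply (h' α)]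
        rfl
      simp [hTdef, map_sub, h1, h2]
    have hTspan : ∀ α : Dual ℝ V, α N = 0 → ∃ c : ℝ, T α = c • N := by
      intro α hα
      obtain ⟨x, rfl⟩ := hsurj α hα
      have hz : m (T (m x)) = 0 := by
        have : T (m x) = (evalEquiv ℝ V).symm (h' (m x)) - (evalEquiv ℝ V).symm (h (m x)) :=
          rfl
        rw [this, map_sub, hinv x, hinv' x, sub_self]
      have : T (m x) ∈ Submodule.span ℝ ({N} : Set V) :=
        hrad _ fun y => by rw [hz]; rfl
      obtain ⟨c, hc⟩ := Submodule.mem_span_singleton.mp this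
      exact ⟨c, hc.symm⟩
    -- the vector v
    refine ⟨T ξ - (ξ (T ξ) / 2) • N, ?_⟩
    intro α β
    set a := α N with hadef
    set b := β N with hbdef
    have hα₀ : (α - a • ξ) N = 0 := by simp [hadef, hξ]
    have hβ₀ : (β - b • ξ) N = 0 := by simp [hbdef, hξ]
    have hzero : h' (α - a • ξ) (β - b • ξ) - h (α - a • ξ) (β - b • ξ) = 0 := by
      rw [hTapp]
      obtain ⟨c, hc⟩ := hTspan _ hα₀
      rw [hc]
      simp [hβ₀]
    have hξξ : h' ξ ξ - h ξ ξ = ξ (T ξ) := hTapp ξ ξ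
    have hξβ : h' ξ β - h ξ β = β (T ξ) := hTapp ξ β
    have hξα : h' α ξ - h α ξ = α (T ξ) := by
      rw [hsym' α ξ, hsym α ξ]; exact hTapp ξ α
    have hexp : h' α β - h α β
        = b * (h' α ξ - h α ξ) + a * (h' ξ β - h ξ β) - a * b * (h' ξ ξ - h ξ ξ) := by
      have := hzero
      simp only [map_sub, map_smul, LinearMap.sub_apply, LinearMap.smul_apply,
        smul_eq_mul] at this
      linarith
    rw [hexp, hξα, hξβ, hξξ]
    simp only [map_sub, map_smul, smul_eq_mul, ← hadef, ← hbdef, hξ]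
    ring
end

section
/- Let V be a 4-dimensional real vector space and g a nondegenerate symmetric bilinear form on V of Lorentzian signature. Let W : V × V × V × V → ℝ be a Weyl candidate: a 4-linear map satisfying W(x,y,z,w) = −W(y,x,z,w) = −W(x,y,w,z) = W(z,w,x,y), the first Bianchi identity W(x,y,z,w) + W(y,z,x,w) + W(z,x,y,w) = 0, and vanishing g-traces (for any basis (e_i) of V with inverse-metric coefficients g^{ij}, ∑_{i,j} g^{ij} W(e_i, x, e_j, y) = 0 for all x,y ∈ V). Let N ∈ V be null and nonzero, let ℓ ∈ V be null with g(N,ℓ) = −1, and let Σ := {x ∈ V : g(x,N) = 0 = g(x,ℓ)}. If W(x,y,z,N) = 0 for all x,y,z ∈ V, then W(u,v,w,ℓ) = 0 for all u,v,w ∈ Σ. -/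
set_option maxHeartbeats 1000000 in
set_option synthInstance.maxHeartbeats 400000 in
/-- for a Weyl candidate `W` on a 4-dimensional Lorentzian vector space
annihilated by a nonzero null vector `N` in its last slot, all components
`W(u,v,w,ℓ)` with `u,v,w` in the spacelike plane `Σ` orthogonal to `N` and to a
transverse null vector `ℓ` (normalized by `g(N,ℓ) = −1`) vanish. -/
theorem stmt5 (V : Type*) [AddCommGroup V] [Module ℝ V]
    (hdim : Module.finrank ℝ V = 4)
    (g : V →ₗ[ℝ] V →ₗ[ℝ] ℝ)
    (hgsym : ∀ x y : V, g x y = g y x)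
    (hgnd : ∀ x : V, (∀ y : V, g x y = 0) → x = 0)
    (hlor : ∃ b : Module.Basis (Fin 4) ℝ V, ∀ i j : Fin 4,
      g (b i) (b j) = if i = j then (if i = 0 then (-1 : ℝ) else 1) else 0)
    (W : V →ₗ[ℝ] V →ₗ[ℝ] V →ₗ[ℝ] V →ₗ[ℝ] ℝ)
    (hW1 : ∀ x y z w : V, W x y z w = - W y x z w)
    (hW2 : ∀ x y z w : V, W x y z w = - W x y w z)
    (hW3 : ∀ x y z w : V, W x y z w = W z w x y)
    (hBianchi : ∀ x y z w : V, W x y z w + W y z x w + W z x y w = 0)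
    (htrace : ∀ (b : Module.Basis (Fin 4) ℝ V) (x y : V),
      ∑ i : Fin 4, ∑ j : Fin 4,
        (Matrix.of fun i j : Fin 4 => g (b i) (b j))⁻¹ i j * W (b i) x (b j) y = 0)
    (N : V) (hNnull : g N N = 0) (hN0 : N ≠ 0)
    (l : V) (hlnull : g l l = 0) (hNl : g N l = -1)
    (hWN : ∀ x y z : V, W x y z N = 0) :
    ∀ u v w : V, g u N = 0 → g u l = 0 → g v N = 0 → g v l = 0 →
      g w N = 0 → g w l = 0 → W u v w l = 0 := by
  -- N in any slot kills W
  have hWN1 : ∀ x y z : V, W N x y z = 0 := by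
    intro x y z; rw [hW3, hW2]; simp [hWN]
  have hWN2 : ∀ x y z : V, W x N y z = 0 := by
    intro x y z; rw [hW1]; simp [hWN1]
  have hWN3 : ∀ x y z : V, W x y N z = 0 := by
    intro x y z; rw [hW3]; exact hWN1 _ _ _
  have hWalt : ∀ x y z : V, W x x y z = 0 := by
    intro x y z
    have := hW1 x x y z; linarith
  intro u v w hu1 hu2 hv1 hv2 hw1 hw2
  have hlN : g l N = -1 := by rw [hgsym]; exact hNl
  have hNu : g N u = 0 := by rw [hgsym]; exact hu1
  have hNv : g N v = 0 := by rw [hgsym]; exact hv1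
  have hlu : g l u = 0 := by rw [hgsym]; exact hu2
  have hlv : g l v = 0 := by rw [hgsym]; exact hv2
  by_cases hind : LinearIndependent ℝ ![u, v]
  · -- adapted basis (N, l, u, v)
    have hvu : g v u = g u v := hgsym v u
    have hli : LinearIndependent ℝ ![N, l, u, v] := by
      rw [Fintype.linearIndependent_iff]
      intro c hc
      have hc' : c 0 • N + c 1 • l + c 2 • u + c 3 • v = 0 := by
        simpa [Fin.sum_univ_four, add_assoc] using hc
      have h0 : c 0 = 0 := by
        have := congrArg (fun z => g z l) hc'
        simpa [hNl, hlnull, hu2, hv2] using this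
      have h1 : c 1 = 0 := by
        have := congrArg (fun z => g z N) hc'
        simpa [hNnull, hlN, hu1, hv1] using this
      have h23 : c 2 • u + c 3 • v = 0 := by
        rw [h0, h1] at hc'; simpa using hc'
      have h2 := (LinearIndependent.pair_iff.mp hind) (c 2) (c 3) h23
      intro i
      fin_cases i <;> simp [h0, h1, h2.1, h2.2]
    have hcard : Fintype.card (Fin 4) = Module.finrank ℝ V := by simp [hdim]
    set b : Module.Basis (Fin 4) ℝ V := basisOfLinearIndependentOfCardEqFinrank hli hcard with hbdef
    have hb : ⇑b = ![N, l, u, v] := coe_basisOfLinearIndependentOfCardEqFinrank hli hcard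
    have hb0 : b 0 = N := by rw [hb]; rfl
    have hb1 : b 1 = l := by rw [hb]; rfl
    have hb2 : b 2 = u := by rw [hb]; rfl
    have hb3 : b 3 = v := by rw [hb]; rfl
    set a : ℝ := g u u with ha
    set e : ℝ := g u v with he
    set c : ℝ := g v v with hcc
    set d : ℝ := a * c - e * e with hd
    -- nondegeneracy of g on Σ = span {u, v}
    have hdne : d ≠ 0 := by
      intro hd0
      have hd0' : a * c - e * e = 0 := by rw [← hd]; exact hd0
      by_cases hbc : e = 0 ∧ c = 0
      · have hv0 : v ≠ 0 := by
          intro h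
          exact one_ne_zero (LinearIndependent.pair_iff.mp hind 0 1 (by simp [h])).2
        apply hv0
        apply hgnd
        intro y
        have hy := Module.Basis.sum_repr b y
        have : g v y = g v (∑ i : Fin 4, b.repr y i • b i) := by rw [hy]
        rw [this]
        simp [Fin.sum_univ_four, hb0, hb1, hb2, hb3, hv1, hv2,
          hvu, ← he, ← hcc, hbc.1, hbc.2, -Module.Basis.sum_repr]
      · set x : V := c • u - e • v with hx
        have hx0 : x ≠ 0 := by
          intro h
          have h' : c • u + (-e) • v = 0 := by
            rw [neg_smul, ← sub_eq_add_neg]; exact h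
          have h2 := LinearIndependent.pair_iff.mp hind c (-e) h'
          exact hbc ⟨by simpa using h2.2, h2.1⟩
        apply hx0
        apply hgnd
        intro y
        have hxu : g x u = 0 := by
          rw [hx]
          simp only [map_sub, map_smul, LinearMap.sub_apply, LinearMap.smul_apply,
            smul_eq_mul, hvu, ← ha, ← he]
          linear_combination hd0'
        have hxv : g x v = 0 := by
          rw [hx]
          simp only [map_sub, map_smul, LinearMap.sub_apply, LinearMap.smul_apply,
            smul_eq_mul, ← he, ← hcc]
          ring
        have hxN : g x N = 0 := by rw [hx]; simp [hu1, hv1]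
        have hxl : g x l = 0 := by rw [hx]; simp [hu2, hv2]
        have hy := Module.Basis.sum_repr b y
        have : g x y = g x (∑ i : Fin 4, b.repr y i • b i) := by rw [hy]
        rw [this]
        simp [Fin.sum_univ_four, hb0, hb1, hb2, hb3, hxu, hxv, hxN, hxl, -Module.Basis.sum_repr]
    -- Gram matrix and its inverse
    have hM : (Matrix.of fun i j : Fin 4 => g (b i) (b j)) =
        !![0, -1, 0, 0; -1, 0, 0, 0; 0, 0, a, e; 0, 0, e, c] := by
      ext i j
      fin_cases i <;> fin_cases j <;>
        simp [hb0, hb1, hb2, hb3, hNnull, hNl, hlnull, hu1, hu2, hv1, hv2,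
          hlN, hNu, hNv, hlu, hlv, hvu, ← ha, ← he, ← hcc,
          Matrix.vecHead, Matrix.vecTail]
    have hMinv : (Matrix.of fun i j : Fin 4 => g (b i) (b j))⁻¹ =
        !![0, -1, 0, 0; -1, 0, 0, 0; 0, 0, c / d, -e / d; 0, 0, -e / d, a / d] := by
      apply Matrix.inv_eq_right_inv
      rw [hM]
      ext i j
      fin_cases i <;> fin_cases j <;>
        simp [Matrix.mul_apply, Fin.sum_univ_four, Matrix.one_apply,
          Matrix.vecHead, Matrix.vecTail] <;>
        field_simp <;> ring
    -- the two trace identities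
    have t1 := htrace b v l
    rw [hMinv] at t1
    simp only [Fin.sum_univ_four, hb0, hb1, hb2, hb3] at t1
    simp [hWN1, hWN2, hWN3, hWalt, Matrix.vecHead, Matrix.vecTail] at t1
    have t2 := htrace b u l
    rw [hMinv] at t2
    simp only [Fin.sum_univ_four, hb0, hb1, hb2, hb3] at t2
    simp [hWN1, hWN2, hWN3, hWalt, Matrix.vecHead, Matrix.vecTail] at t2
    -- rewrite everything in terms of P := W u v u l and Q := W u v v l
    have hvu1 : W v u u l = - W u v u l := by rw [hW1]
    have hvu2 : W v u v l = - W u v v l := by rw [hW1]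
    rw [hvu1, hvu2] at t2
    set P : ℝ := W u v u l with hP
    set Q : ℝ := W u v v l with hQ
    have e1 : c * P - e * Q = 0 := by
      field_simp at t1
      linarith [t1]
    have e2 : e * P - a * Q = 0 := by
      field_simp at t2
      linarith [t2]
    have hP0 : P = 0 := by
      have hdp : d * P = 0 := by rw [hd]; linear_combination a * e1 - e * e2
      rcases mul_eq_zero.mp hdp with h | h
      · exact absurd h hdne
      · exact h
    have hQ0 : Q = 0 := by
      have hdq : d * Q = 0 := by rw [hd]; linear_combination e * e1 - c * e2
      rcases mul_eq_zero.mp hdq with h | h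
      · exact absurd h hdne
      · exact h
    -- expand w in the adapted basis
    have hwr := Module.Basis.sum_repr b w
    have hwexp : w = b.repr w 0 • N + b.repr w 1 • l + b.repr w 2 • u + b.repr w 3 • v := by
      conv_lhs => rw [← hwr]
      simp [Fin.sum_univ_four, hb0, hb1, hb2, hb3, add_assoc, -Module.Basis.sum_repr]
    have hr0 : b.repr w 0 = 0 := by
      have := congrArg (fun z => g z l) hwexp
      simp [hw2, hNl, hlnull, hu2, hv2] at this
      linarith
    have hr1 : b.repr w 1 = 0 := by
      have := congrArg (fun z => g z N) hwexp
      simp [hw1, hNnull, hlN, hu1, hv1] at this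
      linarith
    rw [hwexp, hr0, hr1]
    simp [← hP, ← hQ, hP0, hQ0]
  · -- u, v linearly dependent
    rw [LinearIndependent.pair_iff] at hind
    push_neg at hind
    obtain ⟨s, t, hst, hne⟩ := hind
    by_cases hs : s = 0
    · have ht : t ≠ 0 := hne hs
      have hv : v = 0 := by
        have : t • v = 0 := by rw [hs] at hst; simpa using hst
        exact (smul_eq_zero.mp this).resolve_left ht
      simp [hv]
    · have hu : u = (-(t/s)) • v := by
        have h1 : s • u = -(t • v) := by
          rw [eq_comm, neg_eq_iff_add_eq_zero, add_comm]; exact hst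
        have h2 := congrArg (fun z => (s⁻¹ : ℝ) • z) h1
        simp only [smul_smul, inv_mul_cancel₀ hs, one_smul, smul_neg] at h2
        rw [h2, div_eq_inv_mul, neg_smul]
      rw [hu, LinearMap.map_smul]
      simp [hWalt]
end

section
/- Let V be a 4-dimensional real vector space and g a nondegenerate symmetric bilinear form on V of Lorentzian signature. Let W : V × V × V × V → ℝ be a Weyl candidate: a 4-linear map satisfying W(x,y,z,w) = −W(y,x,z,w) = −W(x,y,w,z) = W(z,w,x,y), the first Bianchi identity W(x,y,z,w) + W(y,z,x,w) + W(z,x,y,w) = 0, and vanishing g-traces (for any basis (e_i) of V with inverse-metric coefficients g^{ij}, ∑_{i,j} g^{ij} W(e_i, x, e_j, y) = 0 for all x,y ∈ V). Let N ∈ V be null and nonzero, let ℓ ∈ V be null with g(N,ℓ) = −1, and let Σ := {x ∈ V : g(x,N) = 0 = g(x,ℓ)}. Assume W(x,y,z,N) = 0 for all x,y,z ∈ V. If, in addition, W(ℓ,x,ℓ,y) = 0 for all x,y ∈ Σ, then W = 0 identically. -/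
set_option maxHeartbeats 1000000 in
/-- a Weyl candidate `W` annihilated by the nonzero null vector `N`
and whose components `E(x,y) = W(ℓ,x,ℓ,y)` vanish on the spacelike plane `Σ`
orthogonal to `N` and `ℓ` must vanish identically. -/
theorem stmt7 (V : Type*) [AddCommGroup V] [Module ℝ V]
    (hdim : Module.finrank ℝ V = 4)
    (g : V →ₗ[ℝ] V →ₗ[ℝ] ℝ)
    (hgsym : ∀ x y : V, g x y = g y x)
    (hgnd : ∀ x : V, (∀ y : V, g x y = 0) → x = 0)
    (hlor : ∃ b : Module.Basis (Fin 4) ℝ V, ∀ i j : Fin 4,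
      g (b i) (b j) = if i = j then (if i = 0 then (-1 : ℝ) else 1) else 0)
    (W : V →ₗ[ℝ] V →ₗ[ℝ] V →ₗ[ℝ] V →ₗ[ℝ] ℝ)
    (hW1 : ∀ x y z w : V, W x y z w = - W y x z w)
    (hW2 : ∀ x y z w : V, W x y z w = - W x y w z)
    (hW3 : ∀ x y z w : V, W x y z w = W z w x y)
    (hBianchi : ∀ x y z w : V, W x y z w + W y z x w + W z x y w = 0)
    (htrace : ∀ (b : Module.Basis (Fin 4) ℝ V) (x y : V),
      ∑ i : Fin 4, ∑ j : Fin 4,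
        (Matrix.of fun i j : Fin 4 => g (b i) (b j))⁻¹ i j * W (b i) x (b j) y = 0)
    (N : V) (hNnull : g N N = 0) (hN0 : N ≠ 0)
    (l : V) (hlnull : g l l = 0) (hNl : g N l = -1)
    (hWN : ∀ x y z : V, W x y z N = 0)
    (hE : ∀ x y : V, g x N = 0 → g x l = 0 → g y N = 0 → g y l = 0 →
      W l x l y = 0) :
    ∀ x y z w : V, W x y z w = 0 := by
  haveI : FiniteDimensional ℝ V := FiniteDimensional.of_finrank_pos (by rw [hdim]; norm_num)
  have hlN : g l N = -1 := by rw [hgsym]; exact hNl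
  -- the two kernels
  have hrank : ∀ u v : V, g v u ≠ 0 →
      Module.finrank ℝ (LinearMap.ker (g.flip u)) = 3 := by
    intro u v huv
    have h1 := LinearMap.finrank_range_add_finrank_ker (g.flip u)
    have hle : Module.finrank ℝ (LinearMap.range (g.flip u)) ≤ 1 := by
      simpa using Submodule.finrank_le (LinearMap.range (g.flip u))
    have hne : LinearMap.range (g.flip u) ≠ ⊥ := by
      intro hb
      have : g v u = 0 := by
        have : (g.flip u) v ∈ LinearMap.range (g.flip u) := LinearMap.mem_range_self _ v
        rw [hb] at this
        simpa using this
      exact huv this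
    have h0 : Module.finrank ℝ (LinearMap.range (g.flip u)) ≠ 0 := by
      rw [Ne, Submodule.finrank_eq_zero]; exact hne
    rw [hdim] at h1
    omega
  have hk1 : Module.finrank ℝ (LinearMap.ker (g.flip N)) = 3 :=
    hrank N l (by rw [hlN]; norm_num)
  have hk2 : Module.finrank ℝ (LinearMap.ker (g.flip l)) = 3 :=
    hrank l N (by rw [hNl]; norm_num)
  set S : Submodule ℝ V := LinearMap.ker (g.flip N) ⊓ LinearMap.ker (g.flip l) with hSdef
  have hS2 : 2 ≤ Module.finrank ℝ S := by
    have h1 := Submodule.finrank_sup_add_finrank_inf_eq (LinearMap.ker (g.flip N))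
      (LinearMap.ker (g.flip l))
    have h2 := Submodule.finrank_le (LinearMap.ker (g.flip N) ⊔ LinearMap.ker (g.flip l))
    rw [hdim] at h2
    rw [hk1, hk2] at h1
    rw [hSdef]
    omega
  set bS := Module.finBasis ℝ S with hbSdef
  set e1 : V := (bS (Fin.castLE hS2 0) : V) with he1def
  set e2 : V := (bS (Fin.castLE hS2 1) : V) with he2def
  have hmem : ∀ i : Fin 2, (bS (Fin.castLE hS2 i) : V) ∈ S := fun i => (bS (Fin.castLE hS2 i)).2
  have he1N : g e1 N = 0 := by
    have := (hmem 0).1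
    simpa using this
  have he1l : g e1 l = 0 := by
    have := (hmem 0).2
    simpa using this
  have he2N : g e2 N = 0 := by
    have := (hmem 1).1
    simpa using this
  have he2l : g e2 l = 0 := by
    have := (hmem 1).2
    simpa using this
  -- linear independence of the pair
  have hliV : LinearIndependent ℝ (fun i : Fin 2 => (bS (Fin.castLE hS2 i) : V)) := by
    have h1 : LinearIndependent ℝ (fun i : Fin 2 => bS (Fin.castLE hS2 i)) :=
      bS.linearIndependent.comp _ (Fin.castLE_injective hS2)
    exact h1.map' S.subtype (Submodule.ker_subtype S)
  have hpair : ∀ c2 c3 : ℝ, c2 • e1 + c3 • e2 = 0 → c2 = 0 ∧ c3 = 0 := by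
    intro c2 c3 h
    rw [Fintype.linearIndependent_iff] at hliV
    have := hliV ![c2, c3] (by simpa [Fin.sum_univ_two] using h)
    exact ⟨this 0, this 1⟩
  have he2ne : e2 ≠ 0 := by
    intro h
    have := (hpair 0 1 (by rw [h]; simp)).2
    norm_num at this
  clear_value e1 e2
  clear hmem hliV he1def he2def hbSdef bS hSdef
  -- the full basis
  have hli : LinearIndependent ℝ ![N, l, e1, e2] := by
    rw [Fintype.linearIndependent_iff]
    intro c hc
    simp [Fin.sum_univ_four] at hc
    have hcl := congrArg (fun u => g u l) hc
    simp [map_add, map_smul, hlnull, hNl, he1l, he2l] at hcl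
    have hcN := congrArg (fun u => g u N) hc
    simp [map_add, map_smul, hNnull, hlN, he1N, he2N, hcl] at hcN
    rw [hcl, hcN] at hc
    simp at hc
    have := hpair _ _ hc
    intro i
    fin_cases i <;> simp [hcl, hcN, this.1, this.2]
  have hcard : Fintype.card (Fin 4) = Module.finrank ℝ V := by simp [hdim]
  set B : Module.Basis (Fin 4) ℝ V := basisOfLinearIndependentOfCardEqFinrank hli hcard with hBdef
  have hB : ⇑B = ![N, l, e1, e2] := coe_basisOfLinearIndependentOfCardEqFinrank hli hcard
  clear_value B
  clear hBdef
  have hB0 : B 0 = N := by rw [hB]; rfl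
  have hB1 : B 1 = l := by rw [hB]; rfl
  have hB2 : B 2 = e1 := by rw [hB]; rfl
  have hB3 : B 3 = e2 := by rw [hB]; rfl
  set a : ℝ := g e1 e1 with hadef
  set bb : ℝ := g e1 e2 with hbbdef
  set d : ℝ := g e2 e2 with hddef
  clear_value a bb d
  have hNe1 : g N e1 = 0 := by rw [hgsym]; exact he1N
  have hNe2 : g N e2 = 0 := by rw [hgsym]; exact he2N
  have hle1 : g l e1 = 0 := by rw [hgsym]; exact he1l
  have hle2 : g l e2 = 0 := by rw [hgsym]; exact he2l
  have he2e1 : g e2 e1 = bb := by rw [hgsym, ← hbbdef]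
  have hΔ : a * d - bb * bb ≠ 0 := by
    intro h0
    have hx : ∀ y : V, g (d • e1 - bb • e2) y = 0 := by
      have hxx : g (d • e1 - bb • e2) = (0 : V →ₗ[ℝ] ℝ) := by
        apply B.ext
        intro i
        rw [hB]
        fin_cases i <;>
          · simp [map_sub, map_smul, he1N, he2N, he1l, he2l, he2e1,
              ← hadef, ← hbbdef, ← hddef]
            try linarith
      intro y
      rw [hxx]
      rfl
    have hx0 := hgnd _ hx
    have h1 : d • e1 + (-bb) • e2 = 0 := by
      rw [neg_smul, ← sub_eq_add_neg]; exact hx0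
    obtain ⟨hd0, hbb0'⟩ := hpair _ _ h1
    have hbb0 : bb = 0 := by linarith
    have he2z : ∀ y : V, g e2 y = 0 := by
      have hzz : g e2 = (0 : V →ₗ[ℝ] ℝ) := by
        apply B.ext
        intro i
        rw [hB]
        fin_cases i <;> simp [he2N, he2l, he2e1, hbb0, ← hddef, hd0]
      intro y
      rw [hzz]
      rfl
    exact he2ne (hgnd _ he2z)
  -- N in any slot kills W
  have zN4 : ∀ x y z : V, W x y z N = 0 := hWN
  have zN3 : ∀ x y z : V, W x y N z = 0 := by
    intro x y z; rw [hW2]; simp [hWN]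
  have zN1 : ∀ x y z : V, W N x y z = 0 := by
    intro x y z; rw [hW3]; exact zN3 y z x
  have zN2 : ∀ x y z : V, W x N y z = 0 := by
    intro x y z; rw [hW1]; simp [zN1]
  -- Gram matrix and inverse
  have hM : (Matrix.of fun i j : Fin 4 => g (B i) (B j))
      = !![0,-1,0,0; -1,0,0,0; 0,0,a,bb; 0,0,bb,d] := by
    ext i j
    simp only [Matrix.of_apply]
    rw [hB]
    fin_cases i <;> fin_cases j <;>
      simp [hNnull, hNl, hlN, hlnull, hNe1, hNe2, hle1, hle2,
        he1N, he1l, he2N, he2l, he2e1, ← hadef, ← hbbdef, ← hddef,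
        Matrix.vecHead, Matrix.vecTail]
  have hMinv : (Matrix.of fun i j : Fin 4 => g (B i) (B j))⁻¹
      = !![0,-1,0,0; -1,0,0,0;
          0,0,d/(a*d-bb*bb),-(bb/(a*d-bb*bb)); 0,0,-(bb/(a*d-bb*bb)),a/(a*d-bb*bb)] := by
    apply Matrix.inv_eq_right_inv
    rw [hM]
    have hΔ2 : a * d - bb ^ 2 ≠ 0 := by rw [sq]; exact hΔ
    have hΔ3 : -bb ^ 2 + a * d ≠ 0 := by rw [sq]; intro h0; apply hΔ; linarith
    ext i j
    fin_cases i <;> fin_cases j <;>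
      · simp [Matrix.mul_apply, Fin.sum_univ_four, Matrix.one_apply,
          Matrix.vecHead, Matrix.vecTail]
        try field_simp
        try ring
  have hT : ∀ x y : V, d * W e1 x e1 y - bb * W e1 x e2 y - bb * W e2 x e1 y
      + a * W e2 x e2 y = 0 := by
    intro x y
    have h := htrace B x y
    rw [hMinv] at h
    simp only [Fin.sum_univ_four, hB0, hB1, hB2, hB3] at h
    simp [zN1, zN2, zN3, zN4, Matrix.vecHead, Matrix.vecTail] at h
    have h3 : ((a*d-bb*bb)*(a*d-bb*bb)) * (d * W e1 x e1 y - bb * W e1 x e2 y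
        - bb * W e2 x e1 y + a * W e2 x e2 y) = 0 := by
      have hΔ4 : d * a - bb ^ 2 ≠ 0 := by rw [sq]; intro h0; apply hΔ; linarith
      field_simp at h
      linear_combination (a*d-bb*bb)*(a*d-bb*bb) * h
    rcases mul_eq_zero.mp h3 with h4 | h4
    · exact absurd h4 (mul_ne_zero hΔ hΔ)
    · exact h4
  -- antisymmetric pair vanishing
  have s1 : ∀ x z w : V, W x x z w = 0 := by
    intro x z w; have := hW1 x x z w; linarith
  have s2 : ∀ x y z : V, W x y z z = 0 := by
    intro x y z; have := hW2 x y z z; linarith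
  -- the seven key components
  have K1 : W l e1 l e1 = 0 := hE e1 e1 he1N he1l he1N he1l
  have K2 : W l e1 l e2 = 0 := hE e1 e2 he1N he1l he2N he2l
  have K3 : W l e2 l e1 = 0 := hE e2 e1 he2N he2l he1N he1l
  have K4 : W l e2 l e2 = 0 := hE e2 e2 he2N he2l he2N he2l
  have hu1 : d * W e1 e2 e1 l - bb * W e1 e2 e2 l = 0 := by
    have h := hT e2 l
    have hC := s1 e2 e1 l
    have hD := s1 e2 e2 l
    linear_combination h + bb * hC - a * hD
  have hu2 : bb * W e1 e2 e1 l - a * W e1 e2 e2 l = 0 := by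
    have h := hT e1 l
    have hA := s1 e1 e1 l
    have hB := s1 e1 e2 l
    have h1 := hW1 e2 e1 e1 l
    have h2 := hW1 e2 e1 e2 l
    linear_combination h - d * hA + bb * hB + bb * h1 - a * h2
  have hu : W e1 e2 e1 l = 0 := by
    have h3 : (a * d - bb * bb) * W e1 e2 e1 l = 0 := by linear_combination a * hu1 - bb * hu2
    rcases mul_eq_zero.mp h3 with h4 | h4
    · exact absurd h4 hΔ
    · exact h4
  have hv : W e1 e2 e2 l = 0 := by
    have h3 : (a * d - bb * bb) * W e1 e2 e2 l = 0 := by linear_combination bb * hu1 - d * hu2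
    rcases mul_eq_zero.mp h3 with h4 | h4
    · exact absurd h4 hΔ
    · exact h4
  have K5 : W l e1 e1 e2 = 0 := by
    have h1 := hW3 l e1 e1 e2
    have h2 := hW2 e1 e2 l e1
    rw [h1, h2, hu]
    ring
  have K6 : W l e2 e1 e2 = 0 := by
    have h1 := hW3 l e2 e1 e2
    have h2 := hW2 e1 e2 l e2
    rw [h1, h2, hv]
    ring
  have K7 : W e1 e2 e1 e2 = 0 := by
    have ha : a * W e1 e2 e1 e2 = 0 := by
      have h := hT e1 e1
      have hA := s1 e1 e1 e1
      have hB := s1 e1 e2 e1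
      have hC := s2 e2 e1 e1
      have h2 := hW1 e2 e1 e2 e1
      have h3 := hW2 e1 e2 e2 e1
      have h4 := hW2 e1 e2 e1 e2
      linear_combination h - d * hA + bb * hB + bb * hC - a * h2 + a * h3
    have hd : d * W e1 e2 e1 e2 = 0 := by
      have h := hT e2 e2
      have hB := s2 e1 e2 e2
      have hC := s1 e2 e1 e2
      have hD := s1 e2 e2 e2
      linear_combination h + bb * hB + bb * hC - a * hD
    have hb : bb * W e1 e2 e1 e2 = 0 := by
      have h := hT e1 e2
      have hA := s1 e1 e1 e2
      have hB := s2 e1 e1 e2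
      have hD := s2 e2 e1 e2
      have h2 := hW1 e2 e1 e1 e2
      linear_combination h - d * hA + bb * hB - a * hD + bb * h2
    have h3 : (a * d - bb * bb) * W e1 e2 e1 e2 = 0 := by
      linear_combination d * ha - bb * hb
    rcases mul_eq_zero.mp h3 with h4 | h4
    · exact absurd h4 hΔ
    · exact h4
  -- normalization rewrite rules
  have A1 : ∀ z w : V, W e1 l z w = -W l e1 z w := fun z w => hW1 e1 l z w
  have A2 : ∀ z w : V, W e2 l z w = -W l e2 z w := fun z w => hW1 e2 l z w
  have A3 : ∀ z w : V, W e2 e1 z w = -W e1 e2 z w := fun z w => hW1 e2 e1 z w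
  have B1 : ∀ x y : V, W x y e1 l = -W x y l e1 := fun x y => hW2 x y e1 l
  have B2 : ∀ x y : V, W x y e2 l = -W x y l e2 := fun x y => hW2 x y e2 l
  have B3 : ∀ x y : V, W x y e2 e1 = -W x y e1 e2 := fun x y => hW2 x y e2 e1
  have C1 : W e1 e2 l e1 = W l e1 e1 e2 := (hW3 e1 e2 l e1).trans rfl
  have C2 : W e1 e2 l e2 = W l e2 e1 e2 := (hW3 e1 e2 l e2).trans rfl
  -- all components vanish
  have hcomp : ∀ i j k m : Fin 4, W (![N, l, e1, e2] i) (![N, l, e1, e2] j)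
      (![N, l, e1, e2] k) (![N, l, e1, e2] m) = 0 := by
    intro i j k m
    fin_cases i <;> fin_cases j <;> fin_cases k <;> fin_cases m <;>
      simp [zN1, zN2, zN3, zN4, s1, s2, A1, A2, A3, B1, B2, B3, C1, C2,
        K1, K2, K3, K4, K5, K6, K7]
  have hW0 : W = 0 := by
    apply B.ext
    intro i
    apply B.ext
    intro j
    apply B.ext
    intro k
    apply B.ext
    intro m
    have := hcomp i j k m
    rw [hB]
    simpa using this
  intro x y z w
  rw [hW0]
  rfl
end

section
/- Let V be a 4-dimensional real vector space and g a nondegenerate symmetric bilinear form on V of Lorentzian signature. Let W : V × V × V × V → ℝ be a Weyl candidate: a 4-linear map satisfying W(x,y,z,w) = −W(y,x,z,w) = −W(x,y,w,z) = W(z,w,x,y), the first Bianchi identity W(x,y,z,w) + W(y,z,x,w) + W(z,x,y,w) = 0, and vanishing g-traces (for any basis (e_i) of V with inverse-metric coefficients g^{ij}, ∑_{i,j} g^{ij} W(e_i, x, e_j, y) = 0 for all x,y ∈ V). Let N ∈ V be null and nonzero and suppose W(x,y,z,N) = 0 for all x,y,z ∈ V. Then there exists a symmetric bilinear form e on V with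 e(N,·) = 0 such that, writing n(x) := g(N,x), one has W(x,y,z,w) = n(x)n(z)e(y,w) − n(x)n(w)e(y,z) − n(y)n(z)e(x,w) + n(y)n(w)e(x,z) for all x,y,z,w ∈ V. -/
set_option maxHeartbeats 1000000 in
theorem tetradAux (V : Type*) [AddCommGroup V] [Module ℝ V]
    (g : V →ₗ[ℝ] V →ₗ[ℝ] ℝ)
    (hgsym : ∀ x y : V, g x y = g y x)
    (b : Module.Basis (Fin 4) ℝ V)
    (hb : ∀ i j : Fin 4, g (b i) (b j) = if i = j then (if i = 0 then (-1:ℝ) else 1) else 0)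
    (N : V) (hNnull : g N N = 0) (hN0 : N ≠ 0) :
    ∃ k m1 m2 : V, g N k ≠ 0 ∧ g k k = 0 ∧
      g N m1 = 0 ∧ g k m1 = 0 ∧ g N m2 = 0 ∧ g k m2 = 0 ∧
      g m1 m1 = 1 ∧ g m2 m2 = 1 ∧ g m1 m2 = 0 ∧
      LinearIndependent ℝ ![N, k, m1, m2] := by
  haveI : FiniteDimensional ℝ V := Module.Finite.of_basis b
  have hdim4 : Module.finrank ℝ V = 4 := Module.finrank_eq_card_basis b
  have gcoord : ∀ x y : V, g x y
      = ∑ i : Fin 4, (if i = 0 then (-1:ℝ) else 1) * (b.repr x i * b.repr y i) := by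
    intro x y
    conv_lhs => rw [← b.sum_repr x, ← b.sum_repr y]
    simp only [map_sum, map_smul, LinearMap.sum_apply, LinearMap.smul_apply, smul_eq_mul, hb,
      mul_ite, mul_zero, Finset.sum_ite_eq, Finset.sum_ite_eq', Finset.mem_univ, if_true]
    refine Finset.sum_congr rfl fun i _ => by split <;> ring
  set ν : Fin 4 → ℝ := fun i => b.repr N i with hν
  have hnull' : -(ν 0 * ν 0) + ν 1 * ν 1 + ν 2 * ν 2 + ν 3 * ν 3 = 0 := by
    have := gcoord N N
    rw [hNnull] at this
    simp [Fin.sum_univ_four, hν] at this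
    linarith
  have hν0 : ν 0 ≠ 0 := by
    intro h0
    apply hN0
    have h1 : ν 1 = 0 ∧ ν 2 = 0 ∧ ν 3 = 0 := by
      refine ⟨?_, ?_, ?_⟩ <;> nlinarith [sq_nonneg (ν 1), sq_nonneg (ν 2), sq_nonneg (ν 3)]
    have hrepr : ∀ i : Fin 4, ν i = 0 := by
      intro i; fin_cases i <;> [exact h0; exact h1.1; exact h1.2.1; exact h1.2.2]
    have : N = ∑ i : Fin 4, ν i • b i := (b.sum_repr N).symm
    rw [this]
    simp [hrepr]
  -- the reflected null vector
  set k : V := (2 * ν 0) • b 0 - N with hk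
  have gNb0 : g N (b 0) = -ν 0 := by
    rw [gcoord]
    simp [Fin.sum_univ_four, Module.Basis.repr_self, Finsupp.single_apply, hν]
  have gb0N : g (b 0) N = -ν 0 := by rw [hgsym]; exact gNb0
  have gb0b0 : g (b 0) (b 0) = -1 := by simpa using hb 0 0
  have hNk : g N k = -(2 * (ν 0 * ν 0)) := by
    rw [hk]
    simp only [map_sub, map_smul, smul_eq_mul, gNb0, hNnull]
    ring
  have hkN : g k N = -(2 * (ν 0 * ν 0)) := by rw [hgsym]; exact hNk
  have hs : g N k ≠ 0 := by
    rw [hNk]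
    intro h; apply hν0; nlinarith
  have gb0k : g (b 0) k = -ν 0 := by
    rw [hk]
    simp only [map_sub, map_smul, smul_eq_mul, gb0b0, gb0N]
    ring
  have hkk : g k k = 0 := by
    conv_lhs => rw [hk]
    simp only [map_sub, LinearMap.sub_apply, map_smul, LinearMap.smul_apply, smul_eq_mul,
      gb0b0, gb0N, gNb0, hNnull]
    ring
  -- the orthogonal complement of N and k
  set Φ : V →ₗ[ℝ] ℝ × ℝ := (g N).prod (g k) with hPhi
  set T : Submodule ℝ V := LinearMap.ker Φ with hT
  have hmemT : ∀ x : V, x ∈ T ↔ g N x = 0 ∧ g k x = 0 := by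
    intro x
    rw [hT, LinearMap.mem_ker, hPhi, LinearMap.prod_apply, Prod.mk.injEq]
    rfl
  have hgb0 : ∀ x : V, g (b 0) x = -(b.repr x 0) := by
    intro x
    rw [gcoord]
    simp [Fin.sum_univ_four, Module.Basis.repr_self, Finsupp.single_apply]
  have hTb0 : ∀ x ∈ T, b.repr x 0 = 0 := by
    intro x hx
    obtain ⟨h1, h2⟩ := (hmemT x).mp hx
    have hsm : g ((2 * ν 0) • b 0) x = 0 := by
      have he : (2 * ν 0) • b 0 = N + k := by rw [hk]; abel
      rw [he, map_add, LinearMap.add_apply, h1, h2]; ring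
    rw [map_smul, LinearMap.smul_apply, smul_eq_mul, hgb0 x] at hsm
    have h2ν : (2 : ℝ) * ν 0 ≠ 0 := by
      intro h; apply hν0; linarith
    have := (mul_eq_zero.mp hsm).resolve_left h2ν
    linarith [this]
  have hposT : ∀ x ∈ T, 0 ≤ g x x := by
    intro x hx
    rw [gcoord, Fin.sum_univ_four, hTb0 x hx]
    simp only [show ((0:Fin 4) = 0) = True by simp, show ((1:Fin 4) = 0) = False by decide,
      show ((2:Fin 4) = 0) = False by decide, show ((3:Fin 4) = 0) = False by decide,
      if_true, if_false]
    nlinarith [sq_nonneg (b.repr x 1), sq_nonneg (b.repr x 2), sq_nonneg (b.repr x 3)]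
  have hdefT : ∀ x ∈ T, g x x = 0 → x = 0 := by
    intro x hx hxx
    have h0 : b.repr x 0 = 0 := hTb0 x hx
    rw [gcoord, Fin.sum_univ_four, h0] at hxx
    simp only [show ((0:Fin 4) = 0) = True by simp, show ((1:Fin 4) = 0) = False by decide,
      show ((2:Fin 4) = 0) = False by decide, show ((3:Fin 4) = 0) = False by decide,
      if_true, if_false, mul_zero, zero_mul] at hxx
    ring_nf at hxx
    have e1 : b.repr x 1 = 0 := by nlinarith [sq_nonneg (b.repr x 1), sq_nonneg (b.repr x 2), sq_nonneg (b.repr x 3)]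
    have e2 : b.repr x 2 = 0 := by nlinarith [sq_nonneg (b.repr x 1), sq_nonneg (b.repr x 2), sq_nonneg (b.repr x 3)]
    have e3 : b.repr x 3 = 0 := by nlinarith [sq_nonneg (b.repr x 1), sq_nonneg (b.repr x 2), sq_nonneg (b.repr x 3)]
    have : x = ∑ i : Fin 4, b.repr x i • b i := (b.sum_repr x).symm
    rw [this, Fin.sum_univ_four, h0, e1, e2, e3]
    simp
  have buildli : ∀ m1 m2 : V, g N m1 = 0 → g k m1 = 0 → g N m2 = 0 → g k m2 = 0 →
      g m1 m1 = 1 → g m2 m2 = 1 → g m1 m2 = 0 → LinearIndependent ℝ ![N, k, m1, m2] := by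
    intro m1 m2 hgN0 hgk0 hgN1 hgk1 h00 h11 h01
    have hm0N : g m1 N = 0 := by rw [hgsym]; exact hgN0
    have hm0k : g m1 k = 0 := by rw [hgsym]; exact hgk0
    have hm1N : g m2 N = 0 := by rw [hgsym]; exact hgN1
    have hm1k : g m2 k = 0 := by rw [hgsym]; exact hgk1
    have h10 : g m2 m1 = 0 := by rw [hgsym]; exact h01
    rw [Fintype.linearIndependent_iff]
    intro c hc
    rw [Fin.sum_univ_four] at hc
    simp only [Matrix.cons_val_zero, Matrix.cons_val_one, Matrix.head_cons,
      Matrix.cons_val_two, Matrix.cons_val_three, Matrix.tail_cons] at hc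
    have a0 : c 0 = 0 := by
      have := congrArg (fun v => g k v) hc
      simp only [map_add, map_smul, LinearMap.smul_apply, smul_eq_mul,
        map_zero, hkN, hkk, hgk0, hgk1] at this
      have hc0 : c 0 * -(2 * (ν 0 * ν 0)) = 0 := by linarith
      rcases mul_eq_zero.mp hc0 with h | h
      · exact h
      · exact absurd (by rw [hNk]; linarith : g N k = 0) hs
    have a1 : c 1 = 0 := by
      have := congrArg (fun v => g N v) hc
      simp only [map_add, map_smul, LinearMap.smul_apply, smul_eq_mul,
        map_zero, hNk, hNnull, hgN0, hgN1] at this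
      have hc1 : c 1 * -(2 * (ν 0 * ν 0)) = 0 := by linarith
      rcases mul_eq_zero.mp hc1 with h | h
      · exact h
      · exact absurd (by rw [hNk]; linarith : g N k = 0) hs
    have a2 : c 2 = 0 := by
      have := congrArg (fun v => g m1 v) hc
      simp only [map_add, map_smul, LinearMap.smul_apply, smul_eq_mul,
        map_zero, hm0N, hm0k, h00, h01] at this
      linarith
    have a3 : c 3 = 0 := by
      have := congrArg (fun v => g m2 v) hc
      simp only [map_add, map_smul, LinearMap.smul_apply, smul_eq_mul,
        map_zero, hm1N, hm1k, h11, h10] at this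
      linarith
    intro i
    fin_cases i <;> [exact a0; exact a1; exact a2; exact a3]
  -- dimension of T
  have hrange : Module.finrank ℝ (LinearMap.range Φ) = 2 := by
    refine le_antisymm ?_ ?_
    · have := Submodule.finrank_le (LinearMap.range Φ)
      simpa using this
    · have li2 : LinearIndependent ℝ ![Φ N, Φ k] := by
        rw [Fintype.linearIndependent_iff]
        intro c hc
        have hΦN : Φ N = (0, g N k) := by
          rw [hPhi]; simp [LinearMap.prod_apply, hNnull, hkN, hNk]
        have hΦk : Φ k = (g N k, 0) := by
          rw [hPhi]; simp [LinearMap.prod_apply, hkk]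
        rw [Fin.sum_univ_two] at hc
        simp only [Matrix.cons_val_zero, Matrix.cons_val_one, Matrix.head_cons, hΦN, hΦk,
          Prod.smul_mk, smul_eq_mul, Prod.mk_add_mk, Prod.mk_eq_zero, mul_zero, add_zero,
          zero_add] at hc
        obtain ⟨hc1, hc2⟩ := hc
        intro i
        fin_cases i
        · exact (mul_eq_zero.mp hc2).resolve_right hs
        · exact (mul_eq_zero.mp hc1).resolve_right hs
      have hspan : Submodule.span ℝ (Set.range ![Φ N, Φ k]) ≤ LinearMap.range Φ := by
        rw [Submodule.span_le]
        rintro v ⟨i, rfl⟩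
        fin_cases i
        · exact ⟨N, rfl⟩
        · exact ⟨k, rfl⟩
      calc (2 : ℕ) = Module.finrank ℝ (Submodule.span ℝ (Set.range ![Φ N, Φ k])) := by
              rw [finrank_span_eq_card li2]; simp
        _ ≤ Module.finrank ℝ (LinearMap.range Φ) := Submodule.finrank_mono hspan
  have hTdim : Module.finrank ℝ T = 2 := by
    have h := LinearMap.finrank_range_add_finrank_ker Φ
    rw [hdim4, hrange] at h
    rw [hT]
    omega
  -- inner product structure on T
  letI core : InnerProductSpace.Core ℝ T :=
    { inner := fun x y => g x y
      conj_inner_symm := fun x y => by simp [hgsym]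
      re_inner_nonneg := fun x => by simpa using hposT x x.2
      add_left := fun x y z => by simp [map_add, LinearMap.add_apply]
      smul_left := fun x y r => by simp [map_smul, LinearMap.smul_apply]
      definite := fun x hx => by
        exact Subtype.ext (hdefT x x.2 hx) }
  letI : NormedAddCommGroup T := core.toNormedAddCommGroup
  letI : InnerProductSpace ℝ T := InnerProductSpace.ofCore core.toCore
  have hinner : ∀ x y : T, (inner ℝ x y : ℝ) = g x y := fun x y => rfl
  obtain ⟨m, -⟩ : ∃ mb : OrthonormalBasis (Fin 2) ℝ T, True :=
    ⟨(stdOrthonormalBasis ℝ T).reindex (finCongr hTdim), trivial⟩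
  have hon := m.orthonormal
  rw [orthonormal_iff_ite] at hon
  have hgm : ∀ i j : Fin 2, g ((m i : V)) ((m j : V)) = if i = j then 1 else 0 := by
    intro i j
    rw [← hinner, hon]
  refine ⟨k, (m 0 : V), (m 1 : V), hs, hkk, ?_, ?_, ?_, ?_, ?_, ?_, ?_, ?_⟩
  · exact ((hmemT _).mp (m 0).2).1
  · exact ((hmemT _).mp (m 0).2).2
  · exact ((hmemT _).mp (m 1).2).1
  · exact ((hmemT _).mp (m 1).2).2
  · have := hgm 0 0; rwa [if_pos rfl] at this
  · have := hgm 1 1; rwa [if_pos rfl] at this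
  · have := hgm 0 1; rwa [if_neg (by decide)] at this
  · exact buildli _ _ ((hmemT _).mp (m 0).2).1 ((hmemT _).mp (m 0).2).2
      ((hmemT _).mp (m 1).2).1 ((hmemT _).mp (m 1).2).2
      (by have := hgm 0 0; rwa [if_pos rfl] at this)
      (by have := hgm 1 1; rwa [if_pos rfl] at this)
      (by have := hgm 0 1; rwa [if_neg (by decide)] at this)


set_option maxHeartbeats 4000000 in
private theorem keyAux {V : Type*} [AddCommGroup V] [Module ℝ V]
    (W : V →ₗ[ℝ] V →ₗ[ℝ] V →ₗ[ℝ] V →ₗ[ℝ] ℝ) (R : V →ₗ[ℝ] V →ₗ[ℝ] V →ₗ[ℝ] V →ₗ[ℝ] ℝ)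
    (N k m1 m2 : V) (s : ℝ) (e : V →ₗ[ℝ] V →ₗ[ℝ] ℝ) (g : V →ₗ[ℝ] V →ₗ[ℝ] ℝ)
    (hs : s ≠ 0)
    (hR : ∀ x y z w : V, R x y z w = g N x * g N z * e y w - g N x * g N w * e y z
      - g N y * g N z * e x w + g N y * g N w * e x z)
    (he : ∀ x y : V, e x y = (s ^ 2)⁻¹ * W k x k y)
    (hKN1 : ∀ y z w : V, W N y z w = 0)
    (hKN2 : ∀ x z w : V, W x N z w = 0)
    (hKN3 : ∀ x y z : V, W x y N z = 0)
    (hKN4 : ∀ x y z : V, W x y z N = 0)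
    (hdiag12 : ∀ x z w : V, W x x z w = 0)
    (hdiag34 : ∀ x y z : V, W x y z z = 0)
    (hkk12 : ∀ z w : V, W k k z w = 0)
    (hkk34 : ∀ x y : V, W x y k k = 0)
    (hNnull : g N N = 0) (hNk : g N k = s) (hNm1 : g N m1 = 0) (hNm2 : g N m2 = 0)
    (z3 : W m1 m2 m1 m2 = 0) (zA : W m1 k m1 m2 = 0) (zB : W m2 k m2 m1 = 0)
    (k111 : W k m1 m1 m2 = 0) (k112 : W k m1 m2 m1 = 0)
    (k121 : W k m2 m2 m1 = 0) (k122 : W k m2 m1 m2 = 0)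
    (s21 : W m1 k m2 m1 = 0) (s22 : W m2 k m1 m2 = 0)
    (t31 : W m1 m2 k m1 = 0) (t32 : W m1 m2 k m2 = 0)
    (t33 : W m2 m1 k m1 = 0) (t34 : W m2 m1 k m2 = 0)
    (t41 : W m1 m2 m1 k = 0) (t42 : W m1 m2 m2 k = 0)
    (t43 : W m2 m1 m1 k = 0) (t44 : W m2 m1 m2 k = 0)
    (p1 : W m1 m2 m2 m1 = 0) (p2 : W m2 m1 m1 m2 = 0) (p3 : W m2 m1 m2 m1 = 0)
    (r14 : ∀ a b : V, W k a b k = - W k a k b)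
    (r23 : ∀ a b : V, W a k k b = - W k a k b)
    (r24 : ∀ a b : V, W a k b k = W k a k b) :
    ∀ α1 β1 a1 b1 α2 β2 a2 b2 α3 β3 a3 b3 α4 β4 a4 b4 : ℝ,
      W (α1•N + β1•k + a1•m1 + b1•m2) (α2•N + β2•k + a2•m1 + b2•m2)
        (α3•N + β3•k + a3•m1 + b3•m2) (α4•N + β4•k + a4•m1 + b4•m2)
      = R (α1•N + β1•k + a1•m1 + b1•m2) (α2•N + β2•k + a2•m1 + b2•m2)
        (α3•N + β3•k + a3•m1 + b3•m2) (α4•N + β4•k + a4•m1 + b4•m2) := by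
  have heN : ∀ y : V, e N y = 0 := by intro y; rw [he, hKN2]; ring
  have heN' : ∀ y : V, e y N = 0 := by intro y; rw [he, hKN4]; ring
  have hek : ∀ y : V, e k y = 0 := by intro y; rw [he, hkk12]; ring
  have hek' : ∀ y : V, e y k = 0 := by intro y; rw [he, hkk34]; ring
  have he12 : e m1 m2 = (s ^ 2)⁻¹ * W k m1 k m2 := he m1 m2
  have he21 : e m2 m1 = (s ^ 2)⁻¹ * W k m2 k m1 := he m2 m1
  have he11 : e m1 m1 = (s ^ 2)⁻¹ * W k m1 k m1 := he m1 m1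
  have he22 : e m2 m2 = (s ^ 2)⁻¹ * W k m2 k m2 := he m2 m2
  intro α1 β1 a1 b1 α2 β2 a2 b2 α3 β3 a3 b3 α4 β4 a4 b4
  rw [hR]
  simp only [map_add, map_smul, LinearMap.add_apply, LinearMap.smul_apply, smul_eq_mul]
  simp only [hKN1, hKN2, hKN3, hKN4, hdiag12, hdiag34, hkk12, hkk34,
    hNnull, hNk, hNm1, hNm2, heN, heN', hek, hek',
    z3, zA, zB, k111, k112, k121, k122, s21, s22,
    t31, t32, t33, t34, t41, t42, t43, t44, p1, p2, p3, r14, r23, r24,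
    he12, he21, he11, he22,
    mul_zero, zero_mul, sub_zero, zero_sub, add_zero, zero_add, neg_zero, neg_neg]
  field_simp
  ring


set_option maxHeartbeats 2000000 in
/-- algebraic normal form of a Weyl candidate annihilated by a nonzero
null vector `N`: with `n(x) := g(N,x)`, there is a symmetric bilinear form `e`
annihilated by `N` such that
`W(x,y,z,w) = n(x)n(z)e(y,w) − n(x)n(w)e(y,z) − n(y)n(z)e(x,w) + n(y)n(w)e(x,z)`. -/
theorem stmt8 (V : Type*) [AddCommGroup V] [Module ℝ V]
    (hdim : Module.finrank ℝ V = 4)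
    (g : V →ₗ[ℝ] V →ₗ[ℝ] ℝ)
    (hgsym : ∀ x y : V, g x y = g y x)
    (hgnd : ∀ x : V, (∀ y : V, g x y = 0) → x = 0)
    (hlor : ∃ b : Module.Basis (Fin 4) ℝ V, ∀ i j : Fin 4,
      g (b i) (b j) = if i = j then (if i = 0 then (-1 : ℝ) else 1) else 0)
    (W : V →ₗ[ℝ] V →ₗ[ℝ] V →ₗ[ℝ] V →ₗ[ℝ] ℝ)
    (hW1 : ∀ x y z w : V, W x y z w = - W y x z w)
    (hW2 : ∀ x y z w : V, W x y z w = - W x y w z)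
    (hW3 : ∀ x y z w : V, W x y z w = W z w x y)
    (hBianchi : ∀ x y z w : V, W x y z w + W y z x w + W z x y w = 0)
    (htrace : ∀ (b : Module.Basis (Fin 4) ℝ V) (x y : V),
      ∑ i : Fin 4, ∑ j : Fin 4,
        (Matrix.of fun i j : Fin 4 => g (b i) (b j))⁻¹ i j * W (b i) x (b j) y = 0)
    (N : V) (hNnull : g N N = 0) (hN0 : N ≠ 0)
    (hWN : ∀ x y z : V, W x y z N = 0) :
    ∃ e : V →ₗ[ℝ] V →ₗ[ℝ] ℝ,
      (∀ x y : V, e x y = e y x) ∧ (∀ y : V, e N y = 0) ∧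
      ∀ x y z w : V, W x y z w =
        g N x * g N z * e y w - g N x * g N w * e y z
        - g N y * g N z * e x w + g N y * g N w * e x z := by
  obtain ⟨b, hb⟩ := hlor
  haveI : FiniteDimensional ℝ V := Module.Finite.of_basis b
  obtain ⟨k, m1, m2, hs, hkk, hNm1, hkm1, hNm2, hkm2, h11, h22, h12, hli⟩ :=
    tetradAux V g hgsym b hb N hNnull hN0
  have hkN : g k N = g N k := (hgsym k N)
  -- W vanishes whenever any slot is N
  have hKN4 : ∀ x y z : V, W x y z N = 0 := hWN
  have hKN3 : ∀ x y z : V, W x y N z = 0 := by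
    intro x y z; have := hW2 x y N z; rw [hWN] at this; linarith
  have hKN1 : ∀ y z w : V, W N y z w = 0 := by
    intro y z w; rw [hW3]; exact hKN3 _ _ _
  have hKN2 : ∀ x z w : V, W x N z w = 0 := by
    intro x z w; have := hW1 x N z w; rw [hKN1] at this; linarith
  -- antisymmetry diagonals
  have hdiag12 : ∀ x z w : V, W x x z w = 0 := by
    intro x z w; have := hW1 x x z w; linarith
  have hdiag34 : ∀ x y z : V, W x y z z = 0 := by
    intro x y z; have := hW2 x y z z; linarith
  have hkk12 : ∀ z w : V, W k k z w = 0 := fun z w => hdiag12 k z w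
  have hkk34 : ∀ x y : V, W x y k k = 0 := fun x y => hdiag34 x y k
  -- the tetrad basis
  have hcard : Fintype.card (Fin 4) = Module.finrank ℝ V := by simp [hdim]
  let c : Module.Basis (Fin 4) ℝ V := basisOfLinearIndependentOfCardEqFinrank hli hcard
  have hc : ⇑c = ![N, k, m1, m2] := coe_basisOfLinearIndependentOfCardEqFinrank hli hcard
  have hci : ∀ i : Fin 4, c i = ![N, k, m1, m2] i := fun i => congrFun hc i
  set s : ℝ := g N k with hsdef
  have hm1N : g m1 N = 0 := by rw [hgsym]; exact hNm1
  have hm2N : g m2 N = 0 := by rw [hgsym]; exact hNm2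
  have hm1k : g m1 k = 0 := by rw [hgsym]; exact hkm1
  have hm2k : g m2 k = 0 := by rw [hgsym]; exact hkm2
  have h21 : g m2 m1 = 0 := by rw [hgsym]; exact h12
  have hGram : (Matrix.of fun i j : Fin 4 => g (c i) (c j))
      = !![0, s, 0, 0; s, 0, 0, 0; 0, 0, 1, 0; 0, 0, 0, 1] := by
    ext i j
    fin_cases i <;> fin_cases j <;>
      simp [hci, hNnull, hkN, hkk, hNm1, hkm1, hNm2, hkm2, h11, h22, h12,
        hm1N, hm2N, hm1k, hm2k, h21, ← hsdef, Matrix.vecHead, Matrix.vecTail]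
  have hGinv : (!![0, s, 0, 0; s, 0, 0, 0; 0, 0, 1, 0; 0, 0, 0, 1] : Matrix (Fin 4) (Fin 4) ℝ)⁻¹
      = !![0, s⁻¹, 0, 0; s⁻¹, 0, 0, 0; 0, 0, 1, 0; 0, 0, 0, 1] := by
    apply Matrix.inv_eq_right_inv
    ext i j
    fin_cases i <;> fin_cases j <;>
      simp [Matrix.mul_apply, Fin.sum_univ_four, Matrix.one_apply,
        Matrix.vecHead, Matrix.vecTail] <;>
      field_simp
  have htr2 : ∀ x y : V, W m1 x m1 y + W m2 x m2 y = 0 := by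
    intro x y
    have h := htrace c x y
    rw [hGram, hGinv] at h
    simp only [Fin.sum_univ_four] at h
    simp [hci, hKN1, hKN3, Matrix.vecHead, Matrix.vecTail] at h
    linarith
  -- component facts
  have z3 : W m1 m2 m1 m2 = 0 := by
    have h := htr2 m2 m2
    have h2 := hdiag12 m2 m2 m2
    linarith
  have zA : W m1 k m1 m2 = 0 := by
    have h := htr2 k m2
    have h2 := hdiag34 m2 k m2
    linarith
  have zB : W m2 k m2 m1 = 0 := by
    have h := htr2 k m1
    have h2 := hdiag34 m1 k m1
    linarith
  -- all one-k components vanish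
  have k111 : W k m1 m1 m2 = 0 := by have := hW1 k m1 m1 m2; linarith
  have k112 : W k m1 m2 m1 = 0 := by have := hW2 k m1 m2 m1; linarith
  have k121 : W k m2 m2 m1 = 0 := by have h1 := hW1 k m2 m2 m1; linarith
  have k122 : W k m2 m1 m2 = 0 := by have h1 := hW2 k m2 m1 m2; linarith
  have s21 : W m1 k m2 m1 = 0 := by have := hW2 m1 k m2 m1; linarith
  have s22 : W m2 k m1 m2 = 0 := by have := hW2 m2 k m1 m2; linarith
  have t31 : W m1 m2 k m1 = 0 := by have := hW3 m1 m2 k m1; linarith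
  have t32 : W m1 m2 k m2 = 0 := by have := hW3 m1 m2 k m2; linarith
  have t33 : W m2 m1 k m1 = 0 := by have := hW3 m2 m1 k m1; linarith
  have t34 : W m2 m1 k m2 = 0 := by have := hW3 m2 m1 k m2; linarith
  have t41 : W m1 m2 m1 k = 0 := by have := hW2 m1 m2 m1 k; linarith
  have t42 : W m1 m2 m2 k = 0 := by have := hW2 m1 m2 m2 k; linarith
  have t43 : W m2 m1 m1 k = 0 := by have := hW2 m2 m1 m1 k; linarith
  have t44 : W m2 m1 m2 k = 0 := by have := hW2 m2 m1 m2 k; linarith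
  -- all pure-m components vanish
  have p1 : W m1 m2 m2 m1 = 0 := by have := hW2 m1 m2 m2 m1; linarith
  have p2 : W m2 m1 m1 m2 = 0 := by have := hW1 m2 m1 m1 m2; linarith
  have p3 : W m2 m1 m2 m1 = 0 := by have h1 := hW1 m2 m1 m2 m1; have h2 := hW2 m1 m2 m2 m1; linarith
  -- two-k cross components in terms of the canonical form
  have r14 : ∀ a b : V, W k a b k = - W k a k b := by
    intro a b; have := hW2 k a b k; linarith
  have r23 : ∀ a b : V, W a k k b = - W k a k b := by
    intro a b; have := hW1 a k k b; linarith
  have r24 : ∀ a b : V, W a k b k = W k a k b := by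
    intro a b
    have h1 := hW1 a k b k
    have h2 := hW2 k a b k
    linarith
  -- the symmetric bilinear form e
  let e : V →ₗ[ℝ] V →ₗ[ℝ] ℝ := LinearMap.mk₂ ℝ (fun x y => (s ^ 2)⁻¹ * W k x k y)
    (fun x x' y => by simp [map_add, LinearMap.add_apply]; ring)
    (fun r x y => by simp [map_smul, LinearMap.smul_apply]; ring)
    (fun x y y' => by simp [map_add]; ring)
    (fun x r y => by simp [map_smul]; ring)
  have he : ∀ x y : V, e x y = (s ^ 2)⁻¹ * W k x k y := fun x y => rfl
  have hesymm : ∀ x y : V, e x y = e y x := by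
    intro x y; rw [he, he, hW3 k x k y]
  have heN : ∀ y : V, e N y = 0 := by
    intro y; rw [he, hKN2]; ring
  have heN' : ∀ y : V, e y N = 0 := by
    intro y; rw [he, hKN4]; ring
  have hek : ∀ y : V, e k y = 0 := by
    intro y; rw [he, hkk12]; ring
  have hek' : ∀ y : V, e y k = 0 := by
    intro y; rw [he, hkk34]; ring
  -- the right-hand side as a 4-linear map
  let R : V →ₗ[ℝ] V →ₗ[ℝ] V →ₗ[ℝ] V →ₗ[ℝ] ℝ := LinearMap.mk₂ ℝ
    (fun x y => LinearMap.mk₂ ℝ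
      (fun z w => g N x * g N z * e y w - g N x * g N w * e y z
        - g N y * g N z * e x w + g N y * g N w * e x z)
      (fun z z' w => by simp [map_add, mul_add, add_mul]; ring)
      (fun r z w => by simp [map_smul, mul_add]; ring)
      (fun z w w' => by simp [map_add, mul_add]; ring)
      (fun z r w => by simp [map_smul]; ring))
    (fun x x' y => by
      apply LinearMap.ext; intro z; apply LinearMap.ext; intro w
      simp [LinearMap.mk₂_apply, map_add, LinearMap.add_apply]; ring)
    (fun r x y => by
      apply LinearMap.ext; intro z; apply LinearMap.ext; intro w
      simp [LinearMap.mk₂_apply, map_smul, LinearMap.smul_apply]; ring)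
    (fun x y y' => by
      apply LinearMap.ext; intro z; apply LinearMap.ext; intro w
      simp [LinearMap.mk₂_apply, map_add, LinearMap.add_apply]; ring)
    (fun x r y => by
      apply LinearMap.ext; intro z; apply LinearMap.ext; intro w
      simp [LinearMap.mk₂_apply, map_smul, LinearMap.smul_apply]; ring)
  have hR : ∀ x y z w : V, R x y z w = g N x * g N z * e y w - g N x * g N w * e y z
      - g N y * g N z * e x w + g N y * g N w * e x z := fun x y z w => rfl
  -- key component identity
  have hNk' : g N k = s := hsdef.symm
  have key := keyAux W R N k m1 m2 s e g hs hR he hKN1 hKN2 hKN3 hKN4 hdiag12 hdiag34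
    hkk12 hkk34 hNnull hNk' hNm1 hNm2 z3 zA zB k111 k112 k121 k122 s21 s22
    t31 t32 t33 t34 t41 t42 t43 t44 p1 p2 p3 r14 r23 r24
  have hdec : ∀ x : V, ∃ α β a bb : ℝ, x = α • N + β • k + a • m1 + bb • m2 := by
    intro x
    refine ⟨c.repr x 0, c.repr x 1, c.repr x 2, c.repr x 3, ?_⟩
    conv_lhs => rw [← c.sum_repr x]
    rw [Fin.sum_univ_four, hci 0, hci 1, hci 2, hci 3]
    simp
  refine ⟨e, hesymm, heN, ?_⟩
  intro x y z w
  obtain ⟨α1, β1, a1, b1, hx⟩ := hdec x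
  obtain ⟨α2, β2, a2, b2, hy⟩ := hdec y
  obtain ⟨α3, β3, a3, b3, hz⟩ := hdec z
  obtain ⟨α4, β4, a4, b4, hw⟩ := hdec w
  rw [hx, hy, hz, hw, key α1 β1 a1 b1 α2 β2 a2 b2 α3 β3 a3 b3 α4 β4 a4 b4, hR]
end
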